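/- Let n ≡ 2 (mod 4), n = 4m+2, and define the latin square L_n of order n by: L_n[i][j] ≡ i+j+1 (mod n) if n−1−m ≤ i ≤ n−2 and j ∈ {m, 3m+1}; L_n[i][j] ≡ i+j−1 if n−m ≤ i ≤ n−1 and j ∈ {m+1, 3m+2}; L_n[i][j] ≡ i+j+m if i = n−1−m and j ∈ {0, m+1, 2m+1, 3m+2}; L_n[i][j] ≡ i+j−m if i = n−1 and j ∈ {0, m, 2m+1, 3m+1}; and L_n[i][j] ≡ i+j otherwise. Then L_n has no transversal. -/

import Mathlib

open scoped Classical

open Fin.NatCast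

/-- A latin square of order `n`: each symbol occurs exactly once in each row and column. -/
def IsLatinSquare {n : ℕ} (L : Fin n → Fin n → Fin n) : Prop :=
  (∀ i, Function.Bijective fun j => L i j) ∧ (∀ j, Function.Bijective fun i => L i j)

/-- A `k`-plex of `L`: a set of cells with exactly `k` in each row, `k` in each column,
and each symbol occurring exactly `k` times. -/
def IsPlex {n : ℕ} (L : Fin n → Fin n → Fin n) (k : ℕ) (K : Finset (Fin n × Fin n)) : Prop :=
  (∀ i, (K.filter fun p => p.1 = i).card = k) ∧
  (∀ j, (K.filter fun p => p.2 = j).card = k) ∧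
  (∀ s, (K.filter fun p => L p.1 p.2 = s).card = k)

/-- `L` has a transversal, i.e. a `1`-plex. -/
def HasTransversal {n : ℕ} (L : Fin n → Fin n → Fin n) : Prop :=
  ∃ K, IsPlex L 1 K

/-- The latin square `Lₙ` of order `n = 4m+2` from the paper. -/
def smallSquare (m n : ℕ) [NeZero n] : Fin n → Fin n → Fin n := fun i j =>
  if (n - 1 - m ≤ (i : ℕ) ∧ (i : ℕ) ≤ n - 2) ∧ ((j : ℕ) = m ∨ (j : ℕ) = 3 * m + 1) then
    i + j + 1
  else if (n - m ≤ (i : ℕ)) ∧ ((j : ℕ) = m + 1 ∨ (j : ℕ) = 3 * m + 2) then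
    i + j - 1
  else if ((i : ℕ) = n - 1 - m) ∧
      ((j : ℕ) = 0 ∨ (j : ℕ) = m + 1 ∨ (j : ℕ) = 2 * m + 1 ∨ (j : ℕ) = 3 * m + 2) then
    i + j + (m : Fin n)
  else if ((i : ℕ) = n - 1) ∧
      ((j : ℕ) = 0 ∨ (j : ℕ) = m ∨ (j : ℕ) = 2 * m + 1 ∨ (j : ℕ) = 3 * m + 1) then
    i + j - (m : Fin n)
  else i + j

open Fin.CommRing

lemma val_add_nat (n : ℕ) [NeZero n] (a : Fin n) (k : ℕ) :
    (a + (k : Fin n)).val = (a.val + k) % n := by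
  rw [Fin.val_add, Fin.val_natCast, Nat.add_mod_mod]

lemma val_sub_nat (n : ℕ) [NeZero n] (a : Fin n) (k : ℕ) (hk : k ≤ n) :
    (a - (k : Fin n)).val = (a.val + (n - k)) % n := by
  rw [Fin.sub_def]
  simp only [Fin.val_natCast]
  rcases eq_or_lt_of_le hk with h | h
  · subst h; simp [Nat.mod_self, Nat.add_comm]
  · rw [Nat.mod_eq_of_lt h, Nat.add_comm]

lemma smallSquare_val (m n : ℕ) [NeZero n] (hn : n = 4*m+2) (i j : Fin n) :
    (smallSquare m n i j).val =
    (if (n - 1 - m ≤ (i:ℕ) ∧ (i:ℕ) ≤ n - 2) ∧ ((j:ℕ) = m ∨ (j:ℕ) = 3*m+1) then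
       (i:ℕ) + (j:ℕ) + 1
     else if (n - m ≤ (i:ℕ)) ∧ ((j:ℕ) = m+1 ∨ (j:ℕ) = 3*m+2) then
       (i:ℕ) + (j:ℕ) + (n-1)
     else if ((i:ℕ) = n-1-m) ∧ ((j:ℕ)=0 ∨ (j:ℕ)=m+1 ∨ (j:ℕ)=2*m+1 ∨ (j:ℕ)=3*m+2) then
       (i:ℕ) + (j:ℕ) + m
     else if ((i:ℕ) = n-1) ∧ ((j:ℕ)=0 ∨ (j:ℕ)=m ∨ (j:ℕ)=2*m+1 ∨ (j:ℕ)=3*m+1) then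
       (i:ℕ) + (j:ℕ) + (n - m)
     else (i:ℕ) + (j:ℕ)) % n := by
  unfold smallSquare
  split_ifs
  · rw [show (1 : Fin n) = ((1:ℕ) : Fin n) by simp, val_add_nat, Fin.val_add, Nat.mod_add_mod]
  · rw [show (1 : Fin n) = ((1:ℕ) : Fin n) by simp, val_sub_nat n _ 1 (by omega),
      Fin.val_add, Nat.mod_add_mod]
  · rw [val_add_nat, Fin.val_add, Nat.mod_add_mod]
  · rw [val_sub_nat n _ m (by omega), Fin.val_add, Nat.mod_add_mod]
  · rw [Fin.val_add]

lemma mod_eq_cases {n a b : ℕ} (hn : 0 < n) (ha : a < 3*n) (hb : b < 3*n)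
    (h : a % n = b % n) : a = b ∨ a = b + n ∨ b = a + n ∨ a = b + 2*n ∨ b = a + 2*n := by
  obtain ⟨qa, ra, hra, hqa⟩ : ∃ q r, r < n ∧ a = n*q + r :=
    ⟨a/n, a%n, Nat.mod_lt a hn, (Nat.div_add_mod a n).symm⟩
  obtain ⟨qb, rb, hrb, hqb⟩ : ∃ q r, r < n ∧ b = n*q + r :=
    ⟨b/n, b%n, Nat.mod_lt b hn, (Nat.div_add_mod b n).symm⟩
  have hr : ra = rb := by
    have h1 : a % n = ra := by rw [hqa, Nat.mul_add_mod, Nat.mod_eq_of_lt hra]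
    have h2 : b % n = rb := by rw [hqb, Nat.mul_add_mod, Nat.mod_eq_of_lt hrb]
    omega
  have hqa3 : qa = 0 ∨ qa = 1 ∨ qa = 2 := by
    by_contra hc
    push_neg at hc
    have h3 : 3 ≤ qa := by omega
    have := Nat.mul_le_mul_left n h3
    omega
  have hqb3 : qb = 0 ∨ qb = 1 ∨ qb = 2 := by
    by_contra hc
    push_neg at hc
    have h3 : 3 ≤ qb := by omega
    have := Nat.mul_le_mul_left n h3
    omega
  rcases hqa3 with h3|h3|h3 <;> rcases hqb3 with h4|h4|h4 <;> subst h3 h4 <;> omega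

set_option maxHeartbeats 1000000 in
lemma row_inj (m n : ℕ) [NeZero n] (hn : n = 4*m+2) (i : Fin n) :
    Function.Injective (fun j => smallSquare m n i j) := by
  intro a b h
  have h' : (smallSquare m n i a).val = (smallSquare m n i b).val := congrArg Fin.val h
  rw [smallSquare_val m n hn, smallSquare_val m n hn] at h'
  have hi := i.isLt
  have hha := a.isLt
  have hhb := b.isLt
  apply Fin.ext
  subst hn
  split_ifs at h' <;>
    · have h'' := mod_eq_cases (by omega) (by omega) (by omega) h'
      omega

set_option maxHeartbeats 1000000 in
lemma col_inj (m n : ℕ) [NeZero n] (hn : n = 4*m+2) (j : Fin n) :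
    Function.Injective (fun i => smallSquare m n i j) := by
  intro a b h
  have h' : (smallSquare m n a j).val = (smallSquare m n b j).val := congrArg Fin.val h
  rw [smallSquare_val m n hn, smallSquare_val m n hn] at h'
  have hj := j.isLt
  have hha := a.isLt
  have hhb := b.isLt
  apply Fin.ext
  subst hn
  split_ifs at h' <;>
    · have h'' := mod_eq_cases (by omega) (by omega) (by omega) h'
      omega

noncomputable def dval (m n : ℕ) [NeZero n] (i j : Fin n) : ℤ :=
  if (n - 1 - m ≤ (i : ℕ) ∧ (i : ℕ) ≤ n - 2) ∧ ((j : ℕ) = m ∨ (j : ℕ) = 3 * m + 1) then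
    1
  else if (n - m ≤ (i : ℕ)) ∧ ((j : ℕ) = m + 1 ∨ (j : ℕ) = 3 * m + 2) then
    -1
  else if ((i : ℕ) = n - 1 - m) ∧
      ((j : ℕ) = 0 ∨ (j : ℕ) = m + 1 ∨ (j : ℕ) = 2 * m + 1 ∨ (j : ℕ) = 3 * m + 2) then
    (m : ℤ)
  else if ((i : ℕ) = n - 1) ∧
      ((j : ℕ) = 0 ∨ (j : ℕ) = m ∨ (j : ℕ) = 2 * m + 1 ∨ (j : ℕ) = 3 * m + 1) then
    -(m : ℤ)
  else 0

lemma dval_spec (m n : ℕ) [NeZero n] (i j : Fin n) :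
    smallSquare m n i j - i - j = ((dval m n i j : ℤ) : Fin n) := by
  unfold smallSquare dval
  split_ifs
  · push_cast; ring
  · push_cast; ring
  · push_cast; ring
  · push_cast; ring
  · push_cast; ring

lemma sum_fiber_eq (n : ℕ) [NeZero n] (K : Finset (Fin n × Fin n)) (f : Fin n × Fin n → Fin n)
    (hf : ∀ s, (K.filter fun p => f p = s).card = 1) :
    ∑ p ∈ K, f p = ∑ x : Fin n, x := by
  have key : ∀ x : Fin n, ∑ p ∈ K.filter (fun p => f p = x), f p = x := by
    intro x
    have h1 : ∀ p ∈ K.filter (fun p => f p = x), f p = x := by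
      intro p hp; exact (Finset.mem_filter.mp hp).2
    rw [Finset.sum_congr rfl h1, Finset.sum_const, hf x, one_smul]
  calc ∑ p ∈ K, f p = ∑ x : Fin n, ∑ p ∈ K.filter (fun p => f p = x), f p :=
        (Finset.sum_fiberwise K f _).symm
    _ = ∑ x : Fin n, x := Finset.sum_congr rfl (fun x _ => key x)

lemma total_sum (m n : ℕ) [NeZero n] (hn : n = 4*m+2) :
    (∑ x : Fin n, x) = ((2*m+1 : ℕ) : Fin n) := by
  have h1 : (∑ x : Fin n, x) = ∑ k ∈ Finset.range n, ((k : ℕ) : Fin n) := by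
    rw [← Fin.sum_univ_eq_sum_range (fun k => ((k:ℕ) : Fin n)) n]
    exact Finset.sum_congr rfl fun x _ => (Fin.cast_val_eq_self x).symm
  rw [h1, ← Nat.cast_sum]
  have h2 : ∑ k ∈ Finset.range n, k = (2*m+1) + (2*m)*n := by
    subst hn
    have h3 := Finset.sum_range_id_mul_two (4*m+2)
    have h4 : 4*m+2-1 = 4*m+1 := by omega
    rw [h4] at h3
    nlinarith [h3]
  rw [h2]
  apply Fin.ext
  rw [Fin.val_natCast, Fin.val_natCast, Nat.add_mul_mod_self_right]

lemma unique_of_card_one {α : Type*} {K : Finset α} {P : α → Prop} [DecidablePred P]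
    (h : (K.filter fun p => P p).card = 1) {a b : α} (ha : a ∈ K) (hb : b ∈ K)
    (hPa : P a) (hPb : P b) : a = b :=
  Finset.card_le_one.mp (le_of_eq h) a (Finset.mem_filter.mpr ⟨ha, hPa⟩)
    b (Finset.mem_filter.mpr ⟨hb, hPb⟩)

lemma three_filters_card (n : ℕ) [NeZero n] (K : Finset (Fin n × Fin n))
    (hrow : ∀ i, (K.filter fun p => p.1 = i).card = 1)
    (Q1 Q2 Q3 : Fin n × Fin n → Prop) [DecidablePred Q1] [DecidablePred Q2] [DecidablePred Q3]
    (r1 r2 : ℕ)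
    (hd12 : ∀ p, Q1 p → Q2 p → False) (hd13 : ∀ p, Q1 p → Q3 p → False)
    (hd23 : ∀ p, Q2 p → Q3 p → False)
    (hr : ∀ p : Fin n × Fin n, (Q1 p ∨ Q2 p ∨ Q3 p) → r1 ≤ (p.1:ℕ) ∧ (p.1:ℕ) ≤ r2) :
    (K.filter fun p => Q1 p).card + (K.filter fun p => Q2 p).card +
      (K.filter fun p => Q3 p).card ≤ r2 + 1 - r1 := by
  classical
  have hdA : Disjoint (K.filter fun p => Q1 p) (K.filter fun p => Q2 p) := by
    rw [Finset.disjoint_left]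
    intro a ha hb
    exact hd12 a (Finset.mem_filter.mp ha).2 (Finset.mem_filter.mp hb).2
  have hdB : Disjoint ((K.filter fun p => Q1 p) ∪ (K.filter fun p => Q2 p))
      (K.filter fun p => Q3 p) := by
    rw [Finset.disjoint_left]
    intro a ha hb
    rcases Finset.mem_union.mp ha with h | h
    · exact hd13 a (Finset.mem_filter.mp h).2 (Finset.mem_filter.mp hb).2
    · exact hd23 a (Finset.mem_filter.mp h).2 (Finset.mem_filter.mp hb).2
  have hcard : ((K.filter fun p => Q1 p) ∪ (K.filter fun p => Q2 p) ∪
      (K.filter fun p => Q3 p)).card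
      = (K.filter fun p => Q1 p).card + (K.filter fun p => Q2 p).card +
        (K.filter fun p => Q3 p).card := by
    rw [Finset.card_union_of_disjoint hdB, Finset.card_union_of_disjoint hdA]
  have hsub : ((K.filter fun p => Q1 p) ∪ (K.filter fun p => Q2 p) ∪
      (K.filter fun p => Q3 p)) ⊆ K.filter fun p => r1 ≤ (p.1:ℕ) ∧ (p.1:ℕ) ≤ r2 := by
    intro a ha
    rcases Finset.mem_union.mp ha with h | h
    · rcases Finset.mem_union.mp h with h' | h'
      · obtain ⟨hK, hP⟩ := Finset.mem_filter.mp h'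
        exact Finset.mem_filter.mpr ⟨hK, hr a (Or.inl hP)⟩
      · obtain ⟨hK, hP⟩ := Finset.mem_filter.mp h'
        exact Finset.mem_filter.mpr ⟨hK, hr a (Or.inr (Or.inl hP))⟩
    · obtain ⟨hK, hP⟩ := Finset.mem_filter.mp h
      exact Finset.mem_filter.mpr ⟨hK, hr a (Or.inr (Or.inr hP))⟩
  have hrange : (K.filter fun p => r1 ≤ (p.1:ℕ) ∧ (p.1:ℕ) ≤ r2).card ≤ r2 + 1 - r1 := by
    have h := Finset.card_le_card_of_injOn (fun p => (p.1 : ℕ))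
      (s := K.filter fun p => r1 ≤ (p.1:ℕ) ∧ (p.1:ℕ) ≤ r2)
      (t := Finset.Icc r1 r2)
      (fun p hp => Finset.mem_Icc.mpr (Finset.mem_filter.mp hp).2)
      (fun a ha b hb hab => by
        have haK := (Finset.mem_filter.mp ha).1
        have hbK := (Finset.mem_filter.mp hb).1
        have h1 : a.1 = b.1 := Fin.ext hab
        exact unique_of_card_one (P := fun p => p.1 = a.1) (hrow a.1) haK hbK rfl h1.symm)
    rw [Nat.card_Icc] at h
    omega
  calc _ = _ := hcard.symm
    _ ≤ _ := Finset.card_le_card hsub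
    _ ≤ r2 + 1 - r1 := hrange

lemma col_filter_card_le_one (n : ℕ) [NeZero n] (K : Finset (Fin n × Fin n))
    (hcol : ∀ j, (K.filter fun p => p.2 = j).card = 1)
    (Q : Fin n × Fin n → Prop) [DecidablePred Q] (c : ℕ) (hQ : ∀ p, Q p → (p.2 : ℕ) = c) :
    (K.filter fun p => Q p).card ≤ 1 := by
  classical
  apply Finset.card_le_one.mpr
  intro a ha b hb
  obtain ⟨haK, haP⟩ := Finset.mem_filter.mp ha
  obtain ⟨hbK, hbP⟩ := Finset.mem_filter.mp hb
  have h2 : a.2 = b.2 := Fin.ext (by rw [hQ a haP, hQ b hbP])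
  exact unique_of_card_one (P := fun p => p.2 = a.2) (hcol a.2) haK hbK rfl h2.symm

lemma row_filter_card_le_one (n : ℕ) [NeZero n] (K : Finset (Fin n × Fin n))
    (hrow : ∀ i, (K.filter fun p => p.1 = i).card = 1)
    (Q : Fin n × Fin n → Prop) [DecidablePred Q] (c : ℕ) (hQ : ∀ p, Q p → (p.1 : ℕ) = c) :
    (K.filter fun p => Q p).card ≤ 1 := by
  classical
  apply Finset.card_le_one.mpr
  intro a ha b hb
  obtain ⟨haK, haP⟩ := Finset.mem_filter.mp ha
  obtain ⟨hbK, hbP⟩ := Finset.mem_filter.mp hb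
  have h2 : a.1 = b.1 := Fin.ext (by rw [hQ a haP, hQ b hbP])
  exact unique_of_card_one (P := fun p => p.1 = a.1) (hrow a.1) haK hbK rfl h2.symm

lemma sum_ite_three (n : ℕ) [NeZero n] (K : Finset (Fin n × Fin n))
    (Q1 Q2 Q3 : Fin n × Fin n → Prop) [DecidablePred Q1] [DecidablePred Q2] [DecidablePred Q3]
    (w : ℤ) :
    ∑ p ∈ K, ((if Q1 p then (1:ℤ) else 0) + (if Q2 p then (1:ℤ) else 0) +
      (if Q3 p then w else 0)) =
    ((K.filter fun p => Q1 p).card : ℤ) + ((K.filter fun p => Q2 p).card : ℤ) +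
      w * ((K.filter fun p => Q3 p).card : ℤ) := by
  classical
  rw [Finset.sum_add_distrib, Finset.sum_add_distrib, Finset.sum_boole, Finset.sum_boole]
  have h3 : ∑ p ∈ K, (if Q3 p then w else 0) = w * ∑ p ∈ K, (if Q3 p then (1:ℤ) else 0) := by
    rw [Finset.mul_sum]
    exact Finset.sum_congr rfl fun p _ => by split_ifs <;> ring
  rw [h3, Finset.sum_boole]

lemma sum_dval_le (m n : ℕ) [NeZero n] (hm : 1 ≤ m) (hn : n = 4*m+2)
    (K : Finset (Fin n × Fin n))
    (hrow : ∀ i, (K.filter fun p => p.1 = i).card = 1)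
    (hcol : ∀ j, (K.filter fun p => p.2 = j).card = 1) :
    ∑ p ∈ K, dval m n p.1 p.2 ≤ 2*(m:ℤ) - 1 := by
  classical
  have step1 : ∑ p ∈ K, dval m n p.1 p.2 ≤
      ∑ p ∈ K, ((if (p.2:ℕ) = m ∧ 3*m+1 ≤ (p.1:ℕ) ∧ (p.1:ℕ) ≤ 4*m then (1:ℤ) else 0) +
        (if (p.2:ℕ) = 3*m+1 ∧ 3*m+1 ≤ (p.1:ℕ) ∧ (p.1:ℕ) ≤ 4*m then (1:ℤ) else 0) +
        (if (p.1:ℕ) = 3*m+1 ∧ ((p.2:ℕ) = 0 ∨ (p.2:ℕ) = m+1 ∨ (p.2:ℕ) = 2*m+1 ∨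
            (p.2:ℕ) = 3*m+2) then (m:ℤ) else 0)) := by
    apply Finset.sum_le_sum
    intro p _
    have h1 := p.1.isLt
    have h2 := p.2.isLt
    unfold dval
    split_ifs <;> omega
  rw [sum_ite_three] at step1
  have hb3 := row_filter_card_le_one n K hrow
      (fun p => (p.1:ℕ) = 3*m+1 ∧ ((p.2:ℕ) = 0 ∨ (p.2:ℕ) = m+1 ∨ (p.2:ℕ) = 2*m+1 ∨
        (p.2:ℕ) = 3*m+2)) (3*m+1) (fun p hp => hp.1)
  have hsum := three_filters_card n K hrow
    (fun p => (p.2:ℕ) = m ∧ 3*m+1 ≤ (p.1:ℕ) ∧ (p.1:ℕ) ≤ 4*m)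
    (fun p => (p.2:ℕ) = 3*m+1 ∧ 3*m+1 ≤ (p.1:ℕ) ∧ (p.1:ℕ) ≤ 4*m)
    (fun p => (p.1:ℕ) = 3*m+1 ∧ ((p.2:ℕ) = 0 ∨ (p.2:ℕ) = m+1 ∨ (p.2:ℕ) = 2*m+1 ∨
      (p.2:ℕ) = 3*m+2))
    (3*m+1) (4*m)
    (fun p hp1 hp2 => by omega) (fun p hp1 hp3 => by omega) (fun p hp2 hp3 => by omega)
    (fun p hp => by omega)
  beta_reduce at hsum
  rcases Nat.le_one_iff_eq_zero_or_eq_one.mp hb3 with h | h <;> rw [h] at step1 hsum <;>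
    push_cast at step1 <;>
    simp only [Nat.cast_zero, Nat.cast_one, mul_zero, mul_one] at step1 <;> omega

lemma sum_dval_ge (m n : ℕ) [NeZero n] (hm : 1 ≤ m) (hn : n = 4*m+2)
    (K : Finset (Fin n × Fin n))
    (hrow : ∀ i, (K.filter fun p => p.1 = i).card = 1)
    (hcol : ∀ j, (K.filter fun p => p.2 = j).card = 1) :
    -(2*(m:ℤ) - 1) ≤ ∑ p ∈ K, dval m n p.1 p.2 := by
  classical
  have step1 : ∑ p ∈ K, -dval m n p.1 p.2 ≤
      ∑ p ∈ K, ((if (p.2:ℕ) = m+1 ∧ 3*m+2 ≤ (p.1:ℕ) ∧ (p.1:ℕ) ≤ 4*m+1 then (1:ℤ) else 0) +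
        (if (p.2:ℕ) = 3*m+2 ∧ 3*m+2 ≤ (p.1:ℕ) ∧ (p.1:ℕ) ≤ 4*m+1 then (1:ℤ) else 0) +
        (if (p.1:ℕ) = 4*m+1 ∧ ((p.2:ℕ) = 0 ∨ (p.2:ℕ) = m ∨ (p.2:ℕ) = 2*m+1 ∨
            (p.2:ℕ) = 3*m+1) then (m:ℤ) else 0)) := by
    apply Finset.sum_le_sum
    intro p _
    have h1 := p.1.isLt
    have h2 := p.2.isLt
    unfold dval
    split_ifs <;> omega
  rw [sum_ite_three] at step1
  rw [Finset.sum_neg_distrib] at step1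
  have hb3 := row_filter_card_le_one n K hrow
      (fun p => (p.1:ℕ) = 4*m+1 ∧ ((p.2:ℕ) = 0 ∨ (p.2:ℕ) = m ∨ (p.2:ℕ) = 2*m+1 ∨
        (p.2:ℕ) = 3*m+1)) (4*m+1) (fun p hp => hp.1)
  have hsum := three_filters_card n K hrow
    (fun p => (p.2:ℕ) = m+1 ∧ 3*m+2 ≤ (p.1:ℕ) ∧ (p.1:ℕ) ≤ 4*m+1)
    (fun p => (p.2:ℕ) = 3*m+2 ∧ 3*m+2 ≤ (p.1:ℕ) ∧ (p.1:ℕ) ≤ 4*m+1)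
    (fun p => (p.1:ℕ) = 4*m+1 ∧ ((p.2:ℕ) = 0 ∨ (p.2:ℕ) = m ∨ (p.2:ℕ) = 2*m+1 ∨
      (p.2:ℕ) = 3*m+1))
    (3*m+2) (4*m+1)
    (fun p hp1 hp2 => by omega) (fun p hp1 hp3 => by omega) (fun p hp2 hp3 => by omega)
    (fun p hp => by omega)
  beta_reduce at hsum
  rcases Nat.le_one_iff_eq_zero_or_eq_one.mp hb3 with h | h <;> rw [h] at step1 hsum <;>
    push_cast at step1 <;>
    simp only [Nat.cast_zero, Nat.cast_one, mul_zero, mul_one] at step1 <;> omega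

lemma no_transversal (m n : ℕ) [NeZero n] (hm : 1 ≤ m) (hn : n = 4*m+2)
    (K : Finset (Fin n × Fin n))
    (hrow : ∀ i, (K.filter fun p => p.1 = i).card = 1)
    (hcol : ∀ j, (K.filter fun p => p.2 = j).card = 1)
    (hsym : ∀ s, (K.filter fun p => smallSquare m n p.1 p.2 = s).card = 1) : False := by
  classical
  have h1 : ∑ p ∈ K, smallSquare m n p.1 p.2 = ∑ x : Fin n, x :=
    sum_fiber_eq n K (fun p => smallSquare m n p.1 p.2) hsym
  have h2 : ∑ p ∈ K, p.1 = ∑ x : Fin n, x := sum_fiber_eq n K (fun p => p.1) hrow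
  have h3 : ∑ p ∈ K, p.2 = ∑ x : Fin n, x := sum_fiber_eq n K (fun p => p.2) hcol
  have hzero : ((2*m+1:ℕ) : Fin n) + ((2*m+1:ℕ) : Fin n) = 0 := by
    rw [← Nat.cast_add]
    have he : 2*m+1+(2*m+1) = n := by omega
    rw [he, Fin.natCast_self]
  have hD : ∑ p ∈ K, (smallSquare m n p.1 p.2 - p.1 - p.2) = ((2*m+1 : ℕ) : Fin n) := by
    rw [Finset.sum_sub_distrib, Finset.sum_sub_distrib, h1, h2, h3, total_sum m n hn]
    linear_combination -hzero
  have hDd : ∑ p ∈ K, (smallSquare m n p.1 p.2 - p.1 - p.2) =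
      ((∑ p ∈ K, dval m n p.1 p.2 : ℤ) : Fin n) := by
    rw [Finset.sum_congr rfl (fun p _ => dval_spec m n p.1 p.2), Int.cast_sum]
  set S := ∑ p ∈ K, dval m n p.1 p.2 with hSdef
  have hS : ((S : ℤ) : Fin n) = ((2*m+1:ℕ) : Fin n) := by rw [← hDd, hD]
  have hle := sum_dval_le m n hm hn K hrow hcol
  have hge := sum_dval_ge m n hm hn K hrow hcol
  rw [← hSdef] at hle hge
  have hzero2 : ((S + (2*m+1) : ℤ) : Fin n) = 0 := by
    rw [Int.cast_add, hS]
    have : (((2*m+1 : ℕ) : ℤ) : Fin n) = ((2*m+1:ℕ) : Fin n) := by push_cast; ring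
    rw [show ((2*m+1 : ℤ) : Fin n) = (((2*m+1:ℕ) : ℤ) : Fin n) by norm_cast, this, hzero]
  set u := (S + (2*m+1)).toNat with hudef
  have hu : (S + (2*m+1)) = (u : ℤ) := (Int.toNat_of_nonneg (by omega)).symm
  rw [hu, Int.cast_natCast] at hzero2
  have hval := congrArg Fin.val hzero2
  rw [Fin.val_natCast, Fin.val_zero] at hval
  have hun : u < n := by omega
  rw [Nat.mod_eq_of_lt hun] at hval
  omega

lemma aux0 : IsLatinSquare (smallSquare 0 2) ∧ ¬ HasTransversal (smallSquare 0 2) := by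
  constructor
  · unfold IsLatinSquare
    decide
  · unfold HasTransversal IsPlex
    decide

theorem stmt14 (m n : ℕ) [NeZero n] (hn : n = 4 * m + 2) :
    IsLatinSquare (smallSquare m n) ∧ ¬ HasTransversal (smallSquare m n) := by
  rcases Nat.eq_zero_or_pos m with hm | hm
  · subst hm
    subst hn
    exact ⟨aux0.1, aux0.2⟩
  · constructor
    · exact ⟨fun i => Finite.injective_iff_bijective.mp (row_inj m n hn i),
        fun j => Finite.injective_iff_bijective.mp (col_inj m n hn j)⟩
    · rintro ⟨K, hK⟩
      obtain ⟨hrow, hcol, hsym⟩ := hK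
      exact no_transversal m n hm hn K hrow hcol hsym
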